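/- Let X be a topological space with a continuous Mal'tsev operation Φ : X³ → X (i.e., Φ(x,y,y) = Φ(y,y,x) = x for all x,y ∈ X). Let Y₁ and Y₂ be compact Hausdorff spaces containing X as a dense subspace (via dense topological embeddings i₁ : X → Y₁ and i₂ : X → Y₂), and suppose there are continuous maps Φ₁ : Y₁³ → Y₁ and Φ₂ : Y₂³ → Y₂ with Φ₁(i₁x, i₁y, i₁z) = i₁(Φ(x,y,z)) and Φ₂(i₂x, i₂y, i₂z) = i₂(Φ(x,y,z)) for all x,y,z ∈ X. Then Y₁ and Y₂ coincide as extensions of X: there exists a homeomorphism f : Y₁ → Y₂ such that f ∘ i₁ = i₂, i.e., f restricts to the identity on X. -/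

import Mathlib

open Filter Topology Set

/-- Extend the Mal'tsev identities from a dense subset to the whole space. -/
private lemma maltsev_ext_ids {X Y : Type*} [TopologicalSpace X] [TopologicalSpace Y]
    [T2Space Y] (Φ : X → X → X → X)
    (h1 : ∀ x y : X, Φ x y y = x ∧ Φ y y x = x)
    (i : X → Y) (hd : DenseRange i) (Ψ : Y → Y → Y → Y)
    (hΨc : Continuous fun t : Y × Y × Y => Ψ t.1 t.2.1 t.2.2)
    (hΨ : ∀ x y z : X, Ψ (i x) (i y) (i z) = i (Φ x y z)) :
    (∀ u v : Y, Ψ u v v = u) ∧ (∀ u v : Y, Ψ v v u = u) := by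
  have hdd : Dense (Set.range (Prod.map i i)) := hd.prodMap hd
  have hc1 : Continuous fun p : Y × Y => Ψ p.1 p.2 p.2 :=
    hΨc.comp (continuous_fst.prodMk (continuous_snd.prodMk continuous_snd))
  have hc2 : Continuous fun p : Y × Y => Ψ p.2 p.2 p.1 :=
    hΨc.comp (continuous_snd.prodMk (continuous_snd.prodMk continuous_fst))
  constructor
  · have := Continuous.ext_on hdd hc1 continuous_fst (by
      rintro _ ⟨⟨x, y⟩, rfl⟩
      simp only [Prod.map_apply]
      rw [hΨ]
      exact congrArg i (h1 x y).1)
    intro u v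
    exact congrFun this (u, v)
  · have := Continuous.ext_on hdd hc2 continuous_fst (by
      rintro _ ⟨⟨x, y⟩, rfl⟩
      simp only [Prod.map_apply]
      rw [hΨ]
      exact congrArg i (h1 x y).2)
    intro u v
    exact congrFun this (u, v)

/-- Key lemma: two points of the closure of the twisted diagonal with the same
first coordinate have the same second coordinate. -/
private lemma maltsev_Z_inj {X Y₁ Y₂ : Type*}
    [TopologicalSpace X] [TopologicalSpace Y₁] [TopologicalSpace Y₂]
    [T2Space Y₁] [T2Space Y₂]
    (Φ : X → X → X → X)
    (h1 : ∀ x y : X, Φ x y y = x ∧ Φ y y x = x)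
    (i₁ : X → Y₁) (i₂ : X → Y₂)
    (hi₁ : IsDenseEmbedding i₁) (hi₂ : IsDenseEmbedding i₂)
    (Φ₁ : Y₁ → Y₁ → Y₁ → Y₁) (Φ₂ : Y₂ → Y₂ → Y₂ → Y₂)
    (hΦ₁c : Continuous (fun t : Y₁ × Y₁ × Y₁ => Φ₁ t.1 t.2.1 t.2.2))
    (hΦ₂c : Continuous (fun t : Y₂ × Y₂ × Y₂ => Φ₂ t.1 t.2.1 t.2.2))
    (hΦ₁ : ∀ x y z : X, Φ₁ (i₁ x) (i₁ y) (i₁ z) = i₁ (Φ x y z))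
    (hΦ₂ : ∀ x y z : X, Φ₂ (i₂ x) (i₂ y) (i₂ z) = i₂ (Φ x y z))
    {y : Y₁} {z z' : Y₂}
    (hz : (y, z) ∈ closure (Set.range fun x => (i₁ x, i₂ x)))
    (hz' : (y, z') ∈ closure (Set.range fun x => (i₁ x, i₂ x))) :
    z = z' := by
  set j : X → Y₁ × Y₂ := fun x => (i₁ x, i₂ x) with hjdef
  set Z : Set (Y₁ × Y₂) := closure (Set.range j) with hZdef
  -- Mal'tsev identities extend to Y₁ and Y₂
  have key₁ := (maltsev_ext_ids Φ h1 i₁ hi₁.dense Φ₁ hΦ₁c hΦ₁).2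
  have key₂ := (maltsev_ext_ids Φ h1 i₂ hi₂.dense Φ₂ hΦ₂c hΦ₂).1
  -- the fiber of Z over an embedded point i₁ x is a singleton
  have fiber : ∀ (x : X) (s : Y₂), (i₁ x, s) ∈ Z → s = i₂ x := by
    intro x s hs
    have hne : NeBot (comap j (𝓝 (i₁ x, s))) := by
      refine comap_neBot fun t ht => ?_
      rw [mem_closure_iff_nhds] at hs
      obtain ⟨p, hp, ⟨x', rfl⟩⟩ := hs t ht
      exact ⟨x', hp⟩
    have hj : Tendsto j (comap j (𝓝 (i₁ x, s))) (𝓝 (i₁ x, s)) := tendsto_comap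
    have h₁ : Tendsto i₁ (comap j (𝓝 (i₁ x, s))) (𝓝 (i₁ x)) :=
      (continuous_fst.tendsto _).comp hj
    have h₂ : Tendsto i₂ (comap j (𝓝 (i₁ x, s))) (𝓝 s) :=
      (continuous_snd.tendsto _).comp hj
    -- pull back through the embedding i₁
    have hid : Tendsto id (comap j (𝓝 (i₁ x, s))) (𝓝 x) := by
      rw [hi₁.toIsDenseInducing.nhds_eq_comap x]
      exact tendsto_comap_iff.2 h₁
    have h₂' : Tendsto i₂ (comap j (𝓝 (i₁ x, s))) (𝓝 (i₂ x)) :=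
      (hi₂.continuous.tendsto x).comp hid
    exact tendsto_nhds_unique h₂ h₂'
  -- filters converging to the two points
  have hneF : NeBot (comap j (𝓝 (y, z))) := by
    refine comap_neBot fun t ht => ?_
    rw [mem_closure_iff_nhds] at hz
    obtain ⟨p, hp, ⟨x', rfl⟩⟩ := hz t ht
    exact ⟨x', hp⟩
  have hneF' : NeBot (comap j (𝓝 (y, z'))) := by
    refine comap_neBot fun t ht => ?_
    rw [mem_closure_iff_nhds] at hz'
    obtain ⟨p, hp, ⟨x', rfl⟩⟩ := hz' t ht
    exact ⟨x', hp⟩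
  set F : Filter X := comap j (𝓝 (y, z)) with hF
  set F' : Filter X := comap j (𝓝 (y, z')) with hF'
  -- the twisted graph: for every x'' ∈ X, (i₁ x'', Φ₂ z z' (i₂ x'')) ∈ Z
  have graph : ∀ x'' : X, (i₁ x'', Φ₂ z z' (i₂ x'')) ∈ Z := by
    intro x''
    have hTj : Tendsto (fun p : X × X => (j p.1, j p.2)) (F ×ˢ F')
        (𝓝 ((y, z), (y, z'))) := by
      rw [nhds_prod_eq]
      exact Filter.Tendsto.prodMap (tendsto_comap (f := j)) (tendsto_comap (f := j))
    have hcont : Continuous (fun q : (Y₁ × Y₂) × (Y₁ × Y₂) =>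
        (Φ₁ q.1.1 q.2.1 (i₁ x''), Φ₂ q.1.2 q.2.2 (i₂ x''))) := by
      refine Continuous.prodMk ?_ ?_
      · exact hΦ₁c.comp (((continuous_fst.comp continuous_fst)).prodMk
          (((continuous_fst.comp continuous_snd)).prodMk continuous_const))
      · exact hΦ₂c.comp (((continuous_snd.comp continuous_fst)).prodMk
          (((continuous_snd.comp continuous_snd)).prodMk continuous_const))
    have hT : Tendsto (fun p : X × X => j (Φ p.1 p.2 x'')) (F ×ˢ F')
        (𝓝 (Φ₁ y y (i₁ x''), Φ₂ z z' (i₂ x''))) := by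
      have heq : (fun p : X × X => j (Φ p.1 p.2 x'')) =
          (fun q : (Y₁ × Y₂) × (Y₁ × Y₂) =>
            (Φ₁ q.1.1 q.2.1 (i₁ x''), Φ₂ q.1.2 q.2.2 (i₂ x''))) ∘
          (fun p : X × X => (j p.1, j p.2)) := by
        funext p
        simp only [Function.comp_apply, hjdef, hΦ₁, hΦ₂]
      rw [heq]
      exact (hcont.tendsto _).comp hTj
    rw [key₁ (i₁ x'') y] at hT
    exact isClosed_closure.mem_of_tendsto hT
      (Eventually.of_forall fun p => subset_closure ⟨Φ p.1 p.2 x'', rfl⟩)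
  -- hence Φ₂ z z' fixes all points of the dense range of i₂, so it is the identity
  have hfix : ∀ x'' : X, Φ₂ z z' (i₂ x'') = i₂ x'' := fun x'' =>
    fiber x'' _ (graph x'')
  have hid2 : (fun s : Y₂ => Φ₂ z z' s) = id := by
    refine Continuous.ext_on hi₂.dense ?_ continuous_id ?_
    · exact hΦ₂c.comp (continuous_const.prodMk (continuous_const.prodMk continuous_id))
    · rintro _ ⟨x'', rfl⟩
      exact hfix x''
  calc z = Φ₂ z z' z' := (key₂ z z').symm
    _ = z' := congrFun hid2 z'

/-- Uniqueness of the compact Hausdorff extension of a continuous Mal'tsev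
operation: if a continuous Mal'tsev operation on X extends continuously to two
compact Hausdorff extensions Y₁ and Y₂, then Y₁ and Y₂ coincide as extensions
of X. -/
theorem maltsev_compactification_unique {X Y₁ Y₂ : Type*}
    [TopologicalSpace X] [TopologicalSpace Y₁] [TopologicalSpace Y₂]
    [CompactSpace Y₁] [T2Space Y₁] [CompactSpace Y₂] [T2Space Y₂]
    (Φ : X → X → X → X)
    (hΦc : Continuous (fun t : X × X × X => Φ t.1 t.2.1 t.2.2))
    (h1 : ∀ x y : X, Φ x y y = x ∧ Φ y y x = x)
    (i₁ : X → Y₁) (i₂ : X → Y₂)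
    (hi₁ : IsDenseEmbedding i₁) (hi₂ : IsDenseEmbedding i₂)
    (Φ₁ : Y₁ → Y₁ → Y₁ → Y₁) (Φ₂ : Y₂ → Y₂ → Y₂ → Y₂)
    (hΦ₁c : Continuous (fun t : Y₁ × Y₁ × Y₁ => Φ₁ t.1 t.2.1 t.2.2))
    (hΦ₂c : Continuous (fun t : Y₂ × Y₂ × Y₂ => Φ₂ t.1 t.2.1 t.2.2))
    (hΦ₁ : ∀ x y z : X, Φ₁ (i₁ x) (i₁ y) (i₁ z) = i₁ (Φ x y z))
    (hΦ₂ : ∀ x y z : X, Φ₂ (i₂ x) (i₂ y) (i₂ z) = i₂ (Φ x y z)) :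
    ∃ f : Y₁ ≃ₜ Y₂, ∀ x : X, f (i₁ x) = i₂ x := by
  set j : X → Y₁ × Y₂ := fun x => (i₁ x, i₂ x) with hjdef
  set Z : Set (Y₁ × Y₂) := closure (Set.range j) with hZdef
  have hjZ : ∀ x : X, j x ∈ Z := fun x => subset_closure ⟨x, rfl⟩
  -- the swapped picture, to get injectivity of the second projection
  have hswap : ∀ c : Y₁ × Y₂, c ∈ Z →
      (c.2, c.1) ∈ closure (Set.range fun x => (i₂ x, i₁ x)) := by
    intro c hc
    have h := (Homeomorph.prodComm Y₁ Y₂).image_closure (Set.range j)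
    have hmem : Prod.swap c ∈ (Homeomorph.prodComm Y₁ Y₂) '' closure (Set.range j) :=
      ⟨c, hc, rfl⟩
    rw [h] at hmem
    have himg : (Homeomorph.prodComm Y₁ Y₂) '' (Set.range j) =
        Set.range fun x => (i₂ x, i₁ x) := by
      ext p
      constructor
      · rintro ⟨_, ⟨x, rfl⟩, rfl⟩; exact ⟨x, rfl⟩
      · rintro ⟨x, rfl⟩; exact ⟨j x, ⟨x, rfl⟩, rfl⟩
    rw [himg] at hmem
    exact hmem
  -- injectivity of the two projections on Z
  have inj₁ : ∀ c ∈ Z, ∀ d ∈ Z, c.1 = d.1 → c = d := by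
    intro c hc d hd h
    have := maltsev_Z_inj Φ h1 i₁ i₂ hi₁ hi₂ Φ₁ Φ₂ hΦ₁c hΦ₂c hΦ₁ hΦ₂
      (y := c.1) (z := c.2) (z' := d.2) (by simpa using hc) (by rw [h]; simpa using hd)
    exact Prod.ext h this
  have inj₂ : ∀ c ∈ Z, ∀ d ∈ Z, c.2 = d.2 → c = d := by
    intro c hc d hd h
    have h1' : ∀ x y : X, Φ x y y = x ∧ Φ y y x = x := h1
    have := maltsev_Z_inj Φ h1 i₂ i₁ hi₂ hi₁ Φ₂ Φ₁ hΦ₂c hΦ₁c hΦ₂ hΦ₁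
      (y := c.2) (z := c.1) (z' := d.1) (hswap c hc) (by rw [h]; exact hswap d hd)
    exact Prod.ext this h
  -- Z is compact
  haveI : CompactSpace Z := isCompact_iff_compactSpace.mp isClosed_closure.isCompact
  -- the two projections, as continuous bijections
  have hp₁c : Continuous (fun c : Z => (c : Y₁ × Y₂).1) :=
    continuous_fst.comp continuous_subtype_val
  have hp₂c : Continuous (fun c : Z => (c : Y₁ × Y₂).2) :=
    continuous_snd.comp continuous_subtype_val
  have hp₁surj : Function.Surjective (fun c : Z => (c : Y₁ × Y₂).1) := by
    intro y
    have hK : IsClosed (Prod.fst '' Z) :=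
      (isClosed_closure.isCompact.image continuous_fst).isClosed
    have hsub : Set.range i₁ ⊆ Prod.fst '' Z := by
      rintro _ ⟨x, rfl⟩
      exact ⟨j x, hjZ x, rfl⟩
    have : y ∈ Prod.fst '' Z := by
      have := hK.closure_subset
      have hcl : closure (Set.range i₁) ⊆ Prod.fst '' Z := by
        rw [← hK.closure_eq]
        exact closure_mono hsub
      exact hcl (by rw [hi₁.dense.closure_eq]; trivial)
    obtain ⟨c, hc, hcy⟩ := this
    exact ⟨⟨c, hc⟩, hcy⟩
  have hp₂surj : Function.Surjective (fun c : Z => (c : Y₁ × Y₂).2) := by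
    intro y
    have hK : IsClosed (Prod.snd '' Z) :=
      (isClosed_closure.isCompact.image continuous_snd).isClosed
    have hsub : Set.range i₂ ⊆ Prod.snd '' Z := by
      rintro _ ⟨x, rfl⟩
      exact ⟨j x, hjZ x, rfl⟩
    have : y ∈ Prod.snd '' Z := by
      have hcl : closure (Set.range i₂) ⊆ Prod.snd '' Z := by
        rw [← hK.closure_eq]
        exact closure_mono hsub
      exact hcl (by rw [hi₂.dense.closure_eq]; trivial)
    obtain ⟨c, hc, hcy⟩ := this
    exact ⟨⟨c, hc⟩, hcy⟩
  have hp₁inj : Function.Injective (fun c : Z => (c : Y₁ × Y₂).1) := by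
    intro c d h
    exact Subtype.ext (inj₁ c c.2 d d.2 h)
  have hp₂inj : Function.Injective (fun c : Z => (c : Y₁ × Y₂).2) := by
    intro c d h
    exact Subtype.ext (inj₂ c c.2 d d.2 h)
  -- homeomorphisms Z ≃ₜ Y₁ and Z ≃ₜ Y₂
  let e₁ : Z ≃ Y₁ := Equiv.ofBijective _ ⟨hp₁inj, hp₁surj⟩
  let e₂ : Z ≃ Y₂ := Equiv.ofBijective _ ⟨hp₂inj, hp₂surj⟩
  let f₁ : Z ≃ₜ Y₁ := Continuous.homeoOfEquivCompactToT2 (f := e₁) hp₁c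
  let f₂ : Z ≃ₜ Y₂ := Continuous.homeoOfEquivCompactToT2 (f := e₂) hp₂c
  refine ⟨f₁.symm.trans f₂, fun x => ?_⟩
  have h1' : f₁ ⟨j x, hjZ x⟩ = i₁ x := rfl
  have h2' : f₂ ⟨j x, hjZ x⟩ = i₂ x := rfl
  have : f₁.symm (i₁ x) = ⟨j x, hjZ x⟩ := by
    rw [← h1', Homeomorph.symm_apply_apply]
  simp only [Homeomorph.trans_apply, this, h2']
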